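/- In the free associative algebra on variables a_{ij} (1 ≤ i,j ≤ m), interpret a word a_{i i₁}a_{i₁i₂}⋯a_{i_{ℓ-1}j} as a lattice path from height i to height j. Fix n < m and i,j > n. Then every path from i to j factors uniquely as a concatenation P₁P₂⋯P_p of nontrivial paths, where each P_r has starting and ending heights > n, consecutive P_r's match at their endpoints, and all intermediate heights of each P_r are ≤ n. Consequently, with c_{i'j'} defined as the formal power series a_{i'j'} + a_{i'*}(I-A₀)^{-1}a_{*j'} (the sum over all nontrivial paths from i' to j' with intermediate heights ≤ n), one has ((I-A)^{-1})_{ij} = ((I-C)^{-1})_{ij} as formal power series. -/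

import Mathlib

namespace GRAux

variable {α : Type*}

/-- Chop a list into runs: each run starts at its first element and continues
through elements failing `p`. -/
def chop (p : α → Bool) : List α → List (List α)
  | [] => []
  | a :: l => (a :: l.takeWhile (fun x => !p x)) :: chop p (l.dropWhile (fun x => !p x))
termination_by l => l.length
decreasing_by
  have := ((l.dropWhile_suffix (fun x => !p x)).sublist).length_le
  simp only [List.length_cons]
  omega

theorem chop_flatten (p : α → Bool) (l : List α) : (chop p l).flatten = l := by
  induction l using chop.induct p with
  | case1 => simp [chop]
  | case2 a l ih =>
    rw [chop]
    simp only [List.flatten_cons, ih, List.cons_append]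
    rw [List.takeWhile_append_dropWhile]

theorem chop_ne_nil (p : α → Bool) (l : List α) : ∀ P ∈ chop p l, P ≠ [] := by
  induction l using chop.induct p with
  | case1 => simp [chop]
  | case2 a l ih =>
    rw [chop]
    intro P hP
    rcases List.mem_cons.mp hP with h | h
    · subst h; simp
    · exact ih P h

theorem chop_tail (p : α → Bool) (l : List α) :
    ∀ P ∈ chop p l, ∀ x ∈ P.tail, p x = false := by
  induction l using chop.induct p with
  | case1 => simp [chop]
  | case2 a l ih =>
    rw [chop]
    intro P hP x hx
    rcases List.mem_cons.mp hP with h | h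
    · subst h
      simp only [List.tail_cons] at hx
      have := List.mem_takeWhile_imp hx
      simpa using this
    · exact ih P h x hx

theorem chop_head (p : α → Bool) (l : List α) (hl : ∀ x ∈ l.head?, p x = true) :
    ∀ P ∈ chop p l, ∀ x ∈ P.head?, p x = true := by
  induction l using chop.induct p with
  | case1 => simp [chop]
  | case2 a l ih =>
    rw [chop]
    intro P hP x hx
    rcases List.mem_cons.mp hP with h | h
    · subst h
      simp only [List.head?_cons, Option.mem_def, Option.some.injEq] at hx
      subst hx
      exact hl a (by simp)
    · refine ih ?_ P h x hx
      intro y hy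
      rcases hd : l.dropWhile (fun x => !p x) with _ | ⟨b, t⟩
      · simp [hd] at hy
      · have hne : l.dropWhile (fun x => !p x) ≠ [] := by simp [hd]
        have := List.head_dropWhile_not (fun x => !p x) (l := l) hne
        simp only [hd, List.head?_cons, Option.mem_def, Option.some.injEq] at hy this
        subst hy
        simpa [hd] using this

theorem flatten_head_prop (p : α → Bool) (parts : List (List α))
    (hne : ∀ P ∈ parts, P ≠ []) (hh : ∀ P ∈ parts, ∀ x ∈ P.head?, p x = true) :
    ∀ x ∈ parts.flatten.head?, p x = true := by
  induction parts with
  | nil => simp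
  | cons P Ps ih =>
    intro x hx
    rcases P with _ | ⟨a, t⟩
    · exact absurd rfl (hne [] (by simp))
    · simp only [List.flatten_cons, List.cons_append, List.head?_cons, Option.mem_def,
        Option.some.injEq] at hx
      subst hx
      exact hh (a :: t) (by simp) a (by simp)

theorem low_prefix_eq (p : α → Bool) :
    ∀ (t t' F F' : List α), (∀ x ∈ t, p x = false) → (∀ x ∈ t', p x = false) →
    (∀ x ∈ F.head?, p x = true) → (∀ x ∈ F'.head?, p x = true) →
    t ++ F = t' ++ F' → t = t' := by
  intro t
  induction t with
  | nil =>
    intro t' F F' _ ht' hF _ heq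
    rcases t' with _ | ⟨b, t''⟩
    · rfl
    · exfalso
      simp only [List.nil_append] at heq
      have hb : p b = true := hF b (by simp [heq])
      have := ht' b (by simp)
      simp [this] at hb
  | cons b t₂ ih =>
    intro t' F F' ht ht' hF hF' heq
    rcases t' with _ | ⟨b', t₂'⟩
    · exfalso
      simp only [List.nil_append] at heq
      have hb : p b = true := hF' b (by simp [← heq])
      have := ht b (by simp)
      simp [this] at hb
    · simp only [List.cons_append, List.cons.injEq] at heq
      obtain ⟨rfl, heq⟩ := heq
      have := ih t₂' F F' (fun x hx => ht x (by simp [hx])) (fun x hx => ht' x (by simp [hx]))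
        hF hF' heq
      rw [this]

theorem parts_eq (p : α → Bool) :
    ∀ (P₁ P₂ : List (List α)),
    (∀ P ∈ P₁, P ≠ [] ∧ (∀ x ∈ P.head?, p x = true) ∧ (∀ x ∈ P.tail, p x = false)) →
    (∀ P ∈ P₂, P ≠ [] ∧ (∀ x ∈ P.head?, p x = true) ∧ (∀ x ∈ P.tail, p x = false)) →
    P₁.flatten = P₂.flatten → P₁ = P₂ := by
  intro P₁
  induction P₁ with
  | nil =>
    intro P₂ _ h2 heq
    rcases P₂ with _ | ⟨Q, Qs⟩
    · rfl
    · exfalso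
      have hQ := (h2 Q (by simp)).1
      rcases Q with _ | ⟨a, t⟩
      · exact hQ rfl
      · simp at heq
  | cons P Ps ih =>
    intro P₂ h1 h2 heq
    rcases P₂ with _ | ⟨Q, Qs⟩
    · exfalso
      have hP := (h1 P (by simp)).1
      rcases P with _ | ⟨a, t⟩
      · exact hP rfl
      · simp at heq
    · -- both nonempty
      obtain ⟨hPne, hPh, hPt⟩ := h1 P (by simp)
      obtain ⟨hQne, hQh, hQt⟩ := h2 Q (by simp)
      rcases P with _ | ⟨a, t⟩; · exact absurd rfl hPne
      rcases Q with _ | ⟨a', t'⟩; · exact absurd rfl hQne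
      simp only [List.flatten_cons, List.cons_append, List.cons.injEq] at heq
      obtain ⟨rfl, heq⟩ := heq
      have hFh : ∀ x ∈ Ps.flatten.head?, p x = true :=
        flatten_head_prop p Ps (fun P hP => (h1 P (by simp [hP])).1)
          (fun P hP => (h1 P (by simp [hP])).2.1)
      have hFh' : ∀ x ∈ Qs.flatten.head?, p x = true :=
        flatten_head_prop p Qs (fun P hP => (h2 P (by simp [hP])).1)
          (fun P hP => (h2 P (by simp [hP])).2.1)
      have ht : t = t' := low_prefix_eq p t t' Ps.flatten Qs.flatten
        (by simpa using hPt) (by simpa using hQt) hFh hFh' heq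
      subst ht
      have hflat : Ps.flatten = Qs.flatten := List.append_cancel_left heq
      have := ih Qs (fun P hP => h1 P (by simp [hP])) (fun P hP => h2 P (by simp [hP])) hflat
      rw [this]

theorem last_prop {rel : α → α → Prop} {qh ql : α → Prop}
    (hcompat : ∀ s t, rel s t → qh t → ql s) :
    ∀ parts : List (List α), (∀ P ∈ parts, P ≠ []) →
    (∀ P ∈ parts, ∀ x ∈ P.head?, qh x) →
    parts.flatten.Chain' rel →
    (∀ x ∈ parts.flatten.getLast?, ql x) →
    ∀ P ∈ parts, ∀ x ∈ P.getLast?, ql x := by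
  intro parts
  induction parts with
  | nil => simp
  | cons P Ps ih =>
    intro hne hhead hchain hlast Q hQ x hx
    rcases Ps with _ | ⟨P', Ps'⟩
    · simp only [List.mem_singleton] at hQ
      subst hQ
      apply hlast
      simpa using hx
    · have hflat : (P :: P' :: Ps').flatten = P ++ (P' :: Ps').flatten := rfl
      rw [hflat] at hchain hlast
      have hP'ne : P' ≠ [] := hne P' (by simp)
      rcases P' with _ | ⟨b, t⟩; · exact absurd rfl hP'ne
      have hheadF : (((b :: t) :: Ps').flatten).head? = some b := by simp
      rcases List.mem_cons.mp hQ with h | h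
      · subst h
        have hrel := (List.isChain_append.mp hchain).2.2 x hx b (by simp [hheadF])
        exact hcompat x b hrel (hhead (b :: t) (by simp) b (by simp))
      · refine ih (fun R hR => hne R (by simp [hR])) (fun R hR => hhead R (by simp [hR]))
          (List.isChain_append.mp hchain).2.1 ?_ Q h x hx
        intro y hy
        apply hlast
        rw [List.getLast?_append]
        have h' : ((b :: t) :: Ps').flatten.getLast? = some y := hy
        rw [h']
        simp [Option.or]

end GRAux


/-- Gelfand–Retakh non-commutative Sylvester identity via path decomposition.
A lattice step is a pair `(i, j) : Fin m × Fin m` (starting and ending heights,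
0-indexed, so "height ≤ n" reads `< n` and "height > n" reads `n ≤ ·`).
First conclusion: every lattice path from a height `≥ n` to a height `≥ n`
factors uniquely into nontrivial paths whose starting and ending heights are `≥ n`
and all of whose intermediate heights are `< n`.
Second conclusion: with `c_{i'j'} = a_{i'j'} + a_{i'*}(I - A₀)⁻¹ a_{*j'}` (the
inverses being hypothesized two-sided inverses, as holds for the formal power
series `I + A + A² + ⋯`), one has `((I-A)⁻¹)_{ij} = ((I-C)⁻¹)_{ij}` for all
high indices `i, j`. -/
theorem gelfand_retakh_sylvester {R : Type*} [Ring R] (m n : ℕ) (hn : n < m)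
    (A : Matrix (Fin m) (Fin m) R)
    (Y : Matrix (Fin n) (Fin n) R)
    (hY1 : (1 - A.submatrix (Fin.castLE hn.le) (Fin.castLE hn.le)) * Y = 1)
    (hY2 : Y * (1 - A.submatrix (Fin.castLE hn.le) (Fin.castLE hn.le)) = 1)
    (X : Matrix (Fin m) (Fin m) R)
    (hX1 : (1 - A) * X = 1) (hX2 : X * (1 - A) = 1) :
    let e : Fin (m - n) → Fin m := fun k => ⟨n + (k : ℕ), by have := k.isLt; omega⟩
    let C : Matrix (Fin (m - n)) (Fin (m - n)) R :=
      Matrix.of fun k l => A (e k) (e l) +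
        ∑ r : Fin n, ∑ s : Fin n,
          A (e k) (Fin.castLE hn.le r) * Y r s * A (Fin.castLE hn.le s) (e l)
    ∀ Z : Matrix (Fin (m - n)) (Fin (m - n)) R,
      (1 - C) * Z = 1 → Z * (1 - C) = 1 →
      -- unique factorization of paths between high heights
      (∀ ps : List (Fin m × Fin m), ps ≠ [] →
        ps.Chain' (fun s t => s.2 = t.1) →
        (∀ x ∈ ps.head?, n ≤ (x.1 : ℕ)) →
        (∀ x ∈ ps.getLast?, n ≤ (x.2 : ℕ)) →
        ∃! parts : List (List (Fin m × Fin m)),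
          parts.flatten = ps ∧
          ∀ P ∈ parts, P ≠ [] ∧
            (∀ x ∈ P.head?, n ≤ (x.1 : ℕ)) ∧
            (∀ x ∈ P.getLast?, n ≤ (x.2 : ℕ)) ∧
            (∀ s ∈ P.tail, (s.1 : ℕ) < n)) ∧
      -- the resulting identity of inverse-matrix entries
      (∀ i j : Fin (m - n), X (e i) (e j) = Z i j) := by
  intro e C Z hZ1 hZ2
  have hCdef : C = Matrix.of fun k l => A (e k) (e l) +
      ∑ r : Fin n, ∑ s : Fin n,
        A (e k) (Fin.castLE hn.le r) * Y r s * A (Fin.castLE hn.le s) (e l) := rfl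
  constructor
  · -- Part 1: unique factorization
    intro ps hne hchain hhead hlast
    set p : Fin m × Fin m → Bool := fun x => decide (n ≤ (x.1 : ℕ)) with hp
    have hp_true : ∀ x : Fin m × Fin m, p x = true ↔ n ≤ (x.1 : ℕ) := by
      intro x; simp [hp]
    have hp_false : ∀ x : Fin m × Fin m, p x = false ↔ (x.1 : ℕ) < n := by
      intro x; simp [hp]
    have hheadB : ∀ x ∈ ps.head?, p x = true := fun x hx => (hp_true x).mpr (hhead x hx)
    have hchopflat := GRAux.chop_flatten p ps
    have hchopne := GRAux.chop_ne_nil p ps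
    have hchoptail := GRAux.chop_tail p ps
    have hchophead := GRAux.chop_head p ps hheadB
    have hchoplast : ∀ P ∈ GRAux.chop p ps, ∀ x ∈ P.getLast?, n ≤ (x.2 : ℕ) := by
      refine GRAux.last_prop (rel := fun s t => s.2 = t.1) (qh := fun x => n ≤ (x.1 : ℕ))
        (ql := fun x => n ≤ (x.2 : ℕ)) ?_ (GRAux.chop p ps) hchopne
        (fun P hP x hx => (hp_true x).mp (hchophead P hP x hx)) ?_ ?_
      · intro s t hrel hq
        rw [hrel]; exact hq
      · rw [hchopflat]; exact hchain
      · rw [hchopflat]; exact hlast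
    refine ⟨GRAux.chop p ps, ⟨hchopflat, ?_⟩, ?_⟩
    · intro P hP
      exact ⟨hchopne P hP, fun x hx => (hp_true x).mp (hchophead P hP x hx),
        fun x hx => hchoplast P hP x hx,
        fun s hs => (hp_false s).mp (hchoptail P hP s hs)⟩
    · intro parts ⟨hflat, hprops⟩
      refine GRAux.parts_eq p parts (GRAux.chop p ps) ?_ ?_ (by rw [hflat, hchopflat])
      · intro P hP
        obtain ⟨h1, h2, _, h4⟩ := hprops P hP
        exact ⟨h1, fun x hx => (hp_true x).mpr (h2 x hx),
          fun x hx => (hp_false x).mpr (h4 x hx)⟩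
      · intro P hP
        exact ⟨hchopne P hP, hchophead P hP, hchoptail P hP⟩
  · -- Part 2: the matrix identity
    have hmn : n + (m - n) = m := by omega
    set σ : Fin n ⊕ Fin (m - n) ≃ Fin m := finSumFinEquiv.trans (finCongr hmn) with hσ
    have hσl : ∀ r : Fin n, σ (Sum.inl r) = Fin.castLE hn.le r := by
      intro r; ext; simp [hσ]
    have hσr : ∀ k : Fin (m - n), σ (Sum.inr k) = e k := by
      intro k; ext; simp [hσ, e]
    set A' : Matrix (Fin n ⊕ Fin (m - n)) (Fin n ⊕ Fin (m - n)) R := A.submatrix σ σ with hA'def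
    set X' : Matrix (Fin n ⊕ Fin (m - n)) (Fin n ⊕ Fin (m - n)) R := X.submatrix σ σ with hX'def
    have hsub : (1 - A).submatrix σ σ = 1 - A' := by
      ext i j
      simp [Matrix.sub_apply, Matrix.one_apply, EmbeddingLike.apply_eq_iff_eq, hA'def]
    have h1 : (1 - A') * X' = 1 := by
      rw [hX'def, ← hsub, Matrix.submatrix_mul_equiv, hX1, Matrix.submatrix_one_equiv]
    have h2 : X' * (1 - A') = 1 := by
      rw [hX'def, ← hsub, Matrix.submatrix_mul_equiv, hX2, Matrix.submatrix_one_equiv]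
    set P0 := A'.toBlocks₁₁ with hP0def
    set Q := A'.toBlocks₁₂ with hQdef
    set Rr := A'.toBlocks₂₁ with hRrdef
    set S := A'.toBlocks₂₂ with hSdef
    set x11 := X'.toBlocks₁₁ with hx11def
    set x12 := X'.toBlocks₁₂ with hx12def
    set x21 := X'.toBlocks₂₁ with hx21def
    set x22 := X'.toBlocks₂₂ with hx22def
    have hA' : A' = Matrix.fromBlocks P0 Q Rr S := (Matrix.fromBlocks_toBlocks A').symm
    have hX' : X' = Matrix.fromBlocks x11 x12 x21 x22 := (Matrix.fromBlocks_toBlocks X').symm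
    have hone : (1 : Matrix (Fin n ⊕ Fin (m - n)) (Fin n ⊕ Fin (m - n)) R) - A' =
        Matrix.fromBlocks (1 - P0) (-Q) (-Rr) (1 - S) := by
      rw [hA', ← Matrix.fromBlocks_one]
      ext i j
      cases i <;> cases j <;> simp [Matrix.fromBlocks]
    have hP0 : P0 = A.submatrix (Fin.castLE hn.le) (Fin.castLE hn.le) := by
      ext r s
      simp [hP0def, Matrix.toBlocks₁₁, hA'def, hσl]
    have hY1' : (1 - P0) * Y = 1 := by rw [hP0]; exact hY1
    have hY2' : Y * (1 - P0) = 1 := by rw [hP0]; exact hY2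
    have key1 : Matrix.fromBlocks (1 - P0) (-Q) (-Rr) (1 - S) *
        Matrix.fromBlocks x11 x12 x21 x22 = Matrix.fromBlocks 1 0 0 1 := by
      rw [← hone, ← hX', h1, Matrix.fromBlocks_one]
    have key2 : Matrix.fromBlocks x11 x12 x21 x22 *
        Matrix.fromBlocks (1 - P0) (-Q) (-Rr) (1 - S) = Matrix.fromBlocks 1 0 0 1 := by
      rw [← hone, ← hX', h2, Matrix.fromBlocks_one]
    rw [Matrix.fromBlocks_multiply] at key1 key2
    have E12 : (1 - P0) * x12 + (-Q) * x22 = 0 := by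
      have h := congrArg Matrix.toBlocks₁₂ key1
      rw [Matrix.toBlocks_fromBlocks₁₂, Matrix.toBlocks_fromBlocks₁₂] at h
      exact h
    have E22 : (-Rr) * x12 + (1 - S) * x22 = 1 := by
      have h := congrArg Matrix.toBlocks₂₂ key1
      rw [Matrix.toBlocks_fromBlocks₂₂, Matrix.toBlocks_fromBlocks₂₂] at h
      exact h
    have F21 : x21 * (1 - P0) + x22 * (-Rr) = 0 := by
      have h := congrArg Matrix.toBlocks₂₁ key2
      rw [Matrix.toBlocks_fromBlocks₂₁, Matrix.toBlocks_fromBlocks₂₁] at h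
      exact h
    have F22 : x21 * (-Q) + x22 * (1 - S) = 1 := by
      have h := congrArg Matrix.toBlocks₂₂ key2
      rw [Matrix.toBlocks_fromBlocks₂₂, Matrix.toBlocks_fromBlocks₂₂] at h
      exact h
    have hC : C = S + Rr * Y * Q := by
      rw [hCdef]
      ext k l
      have hS : S k l = A (e k) (e l) := by
        simp [hSdef, Matrix.toBlocks₂₂, hA'def, hσr]
      have hRY : ∀ r : Fin n, Rr k r = A (e k) (Fin.castLE hn.le r) := by
        intro r; simp [hRrdef, Matrix.toBlocks₂₁, hA'def, hσr, hσl]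
      have hQ : ∀ s : Fin n, Q s l = A (Fin.castLE hn.le s) (e l) := by
        intro s; simp [hQdef, Matrix.toBlocks₁₂, hA'def, hσr, hσl]
      simp only [Matrix.of_apply, Matrix.add_apply, Matrix.mul_apply, hS]
      congr 1
      rw [Finset.sum_comm]
      refine Finset.sum_congr rfl fun s _ => ?_
      rw [Finset.sum_mul]
      refine Finset.sum_congr rfl fun r _ => ?_
      rw [hRY r, hQ s]
    have E12' : (1 - P0) * x12 = Q * x22 := by
      rw [Matrix.neg_mul] at E12
      exact add_neg_eq_zero.mp E12
    have hx12v : x12 = Y * (Q * x22) := by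
      calc x12 = (1 : Matrix (Fin n) (Fin n) R) * x12 := (Matrix.one_mul _).symm
        _ = (Y * (1 - P0)) * x12 := by rw [hY2']
        _ = Y * ((1 - P0) * x12) := by rw [Matrix.mul_assoc]
        _ = Y * (Q * x22) := by rw [E12']
    have hZleft : (1 - C) * x22 = 1 := by
      have hCx : C * x22 = S * x22 + Rr * x12 := by
        rw [hC, Matrix.add_mul]
        congr 1
        rw [hx12v, Matrix.mul_assoc, Matrix.mul_assoc]
      rw [Matrix.sub_mul, Matrix.one_mul, hCx]
      have h := E22
      rw [Matrix.neg_mul, Matrix.sub_mul, Matrix.one_mul] at h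
      rw [← h]
      abel
    have F21' : x21 * (1 - P0) = x22 * Rr := by
      rw [Matrix.mul_neg] at F21
      exact add_neg_eq_zero.mp F21
    have hx21v : x21 = (x22 * Rr) * Y := by
      calc x21 = x21 * (1 : Matrix (Fin n) (Fin n) R) := (Matrix.mul_one _).symm
        _ = x21 * ((1 - P0) * Y) := by rw [hY1']
        _ = (x21 * (1 - P0)) * Y := by rw [Matrix.mul_assoc]
        _ = (x22 * Rr) * Y := by rw [F21']
    have hZright : x22 * (1 - C) = 1 := by
      have hCx : x22 * C = x22 * S + x21 * Q := by
        rw [hC, Matrix.mul_add]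
        congr 1
        rw [hx21v, ← Matrix.mul_assoc, ← Matrix.mul_assoc]
      rw [Matrix.mul_sub, Matrix.mul_one, hCx]
      have h := F22
      rw [Matrix.mul_neg, Matrix.mul_sub, Matrix.mul_one] at h
      rw [← h]
      abel
    have hx22Z : x22 = Z := by
      calc x22 = x22 * 1 := (mul_one _).symm
        _ = x22 * ((1 - C) * Z) := by rw [hZ1]
        _ = (x22 * (1 - C)) * Z := by rw [mul_assoc]
        _ = 1 * Z := by rw [hZright]
        _ = Z := one_mul _
    intro i j
    have : X (e i) (e j) = x22 i j := by
      simp [hx22def, Matrix.toBlocks₂₂, hX'def, hσr]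
    rw [this, hx22Z]
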